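/- (Fermat–Torricelli problem.) Let (X,‖·‖) be a real normed space, n ≥ 2, and v_1,…,v_n ∈ X distinct. Define f(u) := Σ_{i=1}^n ‖u − v_i‖ for u ∈ X. Then: (a) ū ∈ X is a global minimizer of f if and only if there exist x*_1,…,x*_n ∈ X* such that Σ_{i=1}^n x*_i = 0, max_{1≤i≤n} ‖x*_i‖* = 1, and for every i = 1,…,n: ⟨x*_i, ū − v_i⟩ = ‖ū − v_i‖ and (‖x*_i‖* − 1)·‖ū − v_i‖ = 0. (b) If moreover ū ∉ {v_1,…,v_n} and x*_1,…,x*_n are as in (a), then the set of all global minimizers of f equals ∩_{i=1}^n {u ∈ X : ⟨x*_i, u − v_i⟩ = ‖x*_i‖*·‖u − v_i‖}. -/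

import Mathlib

open Finset Filter Topology Set

section FTHelpers
variable {X : Type*} [NormedAddCommGroup X] [NormedSpace ℝ X]

noncomputable def dqFT (z h : X) (t : ℝ) : ℝ := (‖z + t • h‖ - ‖z‖) / t

noncomputable def phiFT (z h : X) : ℝ := sInf (dqFT z h '' Set.Ioi 0)

lemma dqFT_mono (z h : X) : MonotoneOn (dqFT z h) (Set.Ioi 0) := by
  intro s hs t ht hst
  simp only [Set.mem_Ioi] at hs ht
  have h1 : t • (z + s • h) = (t - s) • z + s • (z + t • h) := by module
  have h2 : t * ‖z + s • h‖ ≤ (t - s) * ‖z‖ + s * ‖z + t • h‖ := by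
    calc t * ‖z + s • h‖ = ‖t • (z + s • h)‖ := by
          rw [norm_smul, Real.norm_eq_abs, abs_of_pos ht]
      _ = ‖(t - s) • z + s • (z + t • h)‖ := by rw [h1]
      _ ≤ ‖(t - s) • z‖ + ‖s • (z + t • h)‖ := norm_add_le _ _
      _ = (t - s) * ‖z‖ + s * ‖z + t • h‖ := by
          rw [norm_smul, norm_smul, Real.norm_eq_abs, Real.norm_eq_abs,
            abs_of_nonneg (sub_nonneg.2 hst), abs_of_pos hs]
  unfold dqFT
  rw [div_le_div_iff₀ hs ht]
  nlinarith

lemma dqFT_lb (z h : X) {t : ℝ} (ht : 0 < t) : -‖h‖ ≤ dqFT z h t := by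
  unfold dqFT
  rw [le_div_iff₀ ht]
  have h1 := norm_sub_norm_le z (z + t • h)
  have h2 : ‖z - (z + t • h)‖ = t * ‖h‖ := by
    have : z - (z + t • h) = -(t • h) := by abel
    rw [this, norm_neg, norm_smul, Real.norm_eq_abs, abs_of_pos ht]
  nlinarith

lemma dqFT_bddBelow (z h : X) : BddBelow (dqFT z h '' Set.Ioi 0) := by
  refine ⟨-‖h‖, ?_⟩
  rintro x ⟨t, ht, rfl⟩
  exact dqFT_lb z h ht

lemma tendsto_dqFT (z h : X) : Tendsto (dqFT z h) (𝓝[>] 0) (𝓝 (phiFT z h)) :=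
  (dqFT_mono z h).tendsto_nhdsGT (dqFT_bddBelow z h)

lemma phiFT_le (z h : X) {t : ℝ} (ht : 0 < t) : phiFT z h ≤ dqFT z h t :=
  csInf_le (dqFT_bddBelow z h) ⟨t, ht, rfl⟩

lemma phiFT_le_norm (z h : X) : phiFT z h ≤ ‖h‖ := by
  refine (phiFT_le z h one_pos).trans ?_
  unfold dqFT
  simp only [one_smul, div_one]
  linarith [norm_add_le z h]

lemma tendsto_mul_nhdsWithinFT {c : ℝ} (hc : 0 < c) :
    Tendsto (fun t : ℝ => c * t) (𝓝[>] 0) (𝓝[>] 0) := by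
  apply tendsto_nhdsWithin_of_tendsto_nhds_of_eventually_within
  · have : Tendsto (fun t : ℝ => c * t) (𝓝 0) (𝓝 (c * 0)) :=
      (continuous_const.mul continuous_id).tendsto 0
    simpa using this.mono_left nhdsWithin_le_nhds
  · filter_upwards [self_mem_nhdsWithin] with t ht
    exact Set.mem_Ioi.2 (mul_pos hc ht)

lemma phiFT_zero (z : X) : phiFT z (0 : X) = 0 := by
  have h1 : Tendsto (dqFT z (0:X)) (𝓝[>] 0) (𝓝 0) := by
    have : ∀ᶠ t in 𝓝[>] (0:ℝ), dqFT z 0 t = 0 := by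
      filter_upwards [self_mem_nhdsWithin] with t ht
      simp [dqFT]
    exact Tendsto.congr' (this.mono fun t ht => ht.symm) tendsto_const_nhds
  exact tendsto_nhds_unique (tendsto_dqFT z 0) h1

lemma phiFT_self (z : X) : phiFT z z = ‖z‖ := by
  refine tendsto_nhds_unique (tendsto_dqFT z z) ?_
  have : ∀ᶠ t in 𝓝[>] (0:ℝ), dqFT z z t = ‖z‖ := by
    filter_upwards [self_mem_nhdsWithin] with t ht
    have ht' : (0:ℝ) < t := ht
    have : z + t • z = (1 + t) • z := by module
    rw [dqFT, this, norm_smul, Real.norm_eq_abs, abs_of_pos (by linarith)]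
    field_simp
    ring
  exact Tendsto.congr' (this.mono fun t ht => ht.symm) tendsto_const_nhds

lemma phiFT_neg_self (z : X) : phiFT z (-z) = -‖z‖ := by
  refine tendsto_nhds_unique (tendsto_dqFT z (-z)) ?_
  have : ∀ᶠ t in 𝓝[>] (0:ℝ), dqFT z (-z) t = -‖z‖ := by
    filter_upwards [Ioo_mem_nhdsGT_of_mem (Set.left_mem_Ico.2 one_pos)] with t ht
    obtain ⟨ht0, ht1⟩ := ht
    have : z + t • (-z) = (1 - t) • z := by module
    rw [dqFT, this, norm_smul, Real.norm_eq_abs, abs_of_pos (by linarith)]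
    field_simp
    ring
  exact Tendsto.congr' (this.mono fun t ht => ht.symm) tendsto_const_nhds

lemma phiFT_smul (z h : X) {c : ℝ} (hc : 0 < c) : phiFT z (c • h) = c * phiFT z h := by
  refine tendsto_nhds_unique (tendsto_dqFT z (c • h)) ?_
  have h1 : Tendsto (fun t => c * dqFT z h (c * t)) (𝓝[>] 0) (𝓝 (c * phiFT z h)) :=
    (((tendsto_dqFT z h).comp (tendsto_mul_nhdsWithinFT hc)).const_mul c)
  refine h1.congr' ?_
  filter_upwards [self_mem_nhdsWithin] with t ht
  have ht' : (0:ℝ) < t := ht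
  rw [dqFT, dqFT]
  have : t • c • h = (c * t) • h := by rw [mul_comm, mul_smul]
  rw [this]
  field_simp

lemma phiFT_add (z h k : X) : phiFT z (h + k) ≤ phiFT z h + phiFT z k := by
  have h1 : Tendsto (fun t => dqFT z h (2 * t) + dqFT z k (2 * t)) (𝓝[>] 0)
      (𝓝 (phiFT z h + phiFT z k)) :=
    (((tendsto_dqFT z h).comp (tendsto_mul_nhdsWithinFT two_pos)).add
      ((tendsto_dqFT z k).comp (tendsto_mul_nhdsWithinFT two_pos)))
  refine le_of_tendsto_of_tendsto (tendsto_dqFT z (h + k)) h1 ?_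
  filter_upwards [self_mem_nhdsWithin] with t ht
  have ht' : (0:ℝ) < t := ht
  have hsplit : (2:ℝ) • (z + t • (h + k)) = (z + (2*t) • h) + (z + (2*t) • k) := by module
  have hnorm : 2 * ‖z + t • (h + k)‖ ≤ ‖z + (2*t) • h‖ + ‖z + (2*t) • k‖ := by
    calc 2 * ‖z + t • (h + k)‖ = ‖(2:ℝ) • (z + t • (h + k))‖ := by
          rw [norm_smul]; norm_num
      _ = ‖(z + (2*t) • h) + (z + (2*t) • k)‖ := by rw [hsplit]
      _ ≤ _ := norm_add_le _ _
  show dqFT z (h+k) t ≤ dqFT z h (2*t) + dqFT z k (2*t)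
  rw [dqFT, dqFT, dqFT, div_add_div _ _ (by positivity) (by positivity),
    div_le_div_iff₀ ht' (by positivity)]
  nlinarith

end FTHelpers

set_option maxHeartbeats 1000000 in
theorem stmt_17 {X : Type*} [NormedAddCommGroup X] [NormedSpace ℝ X]
    (n : ℕ) (hn : 2 ≤ n) (v : Fin n → X) (hv : Function.Injective v) :
    (∀ ub : X,
      (∀ u : X, ∑ i, ‖ub - v i‖ ≤ ∑ i, ‖u - v i‖) ↔
        ∃ xs : Fin n → (X →L[ℝ] ℝ),
          (∑ i, xs i) = 0 ∧ (⨆ i, ‖xs i‖) = 1 ∧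
          ∀ i, xs i (ub - v i) = ‖ub - v i‖ ∧ (‖xs i‖ - 1) * ‖ub - v i‖ = 0) ∧
    (∀ ub : X, ∀ xs : Fin n → (X →L[ℝ] ℝ),
      (∀ u : X, ∑ i, ‖ub - v i‖ ≤ ∑ i, ‖u - v i‖) →
      (∑ i, xs i) = 0 → (⨆ i, ‖xs i‖) = 1 →
      (∀ i, xs i (ub - v i) = ‖ub - v i‖ ∧ (‖xs i‖ - 1) * ‖ub - v i‖ = 0) →
      (∀ i, ub ≠ v i) →
      {u : X | ∀ w : X, ∑ i, ‖u - v i‖ ≤ ∑ i, ‖w - v i‖} =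
        ⋂ i, {u : X | xs i (u - v i) = ‖xs i‖ * ‖u - v i‖}) := by
  haveI : NeZero n := ⟨by omega⟩
  -- each norm ≤ 1 from the sup condition
  have hle1 : ∀ (xs : Fin n → (X →L[ℝ] ℝ)), (⨆ i, ‖xs i‖) = 1 → ∀ i, ‖xs i‖ ≤ 1 := by
    intro xs hsup i
    calc ‖xs i‖ ≤ ⨆ j, ‖xs j‖ :=
          le_ciSup (f := fun j => ‖xs j‖) (Set.Finite.bddAbove (Set.finite_range _)) i
      _ = 1 := hsup
  -- key computation
  have key : ∀ (ub : X) (xs : Fin n → (X →L[ℝ] ℝ)), (∑ i, xs i) = 0 →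
      (∀ i, xs i (ub - v i) = ‖ub - v i‖) →
      ∀ u : X, ∑ i, (xs i) (u - v i) = ∑ i, ‖ub - v i‖ := by
    intro ub xs hsum heq u
    have h0 : ∀ w : X, ∑ i, (xs i) w = 0 := by
      intro w
      have := congrArg (fun f : X →L[ℝ] ℝ => f w) hsum
      simpa using this
    calc ∑ i, xs i (u - v i) = ∑ i, (xs i u - xs i (v i)) := by simp [map_sub]
      _ = ∑ i, xs i u - ∑ i, xs i (v i) := Finset.sum_sub_distrib ..
      _ = ∑ i, xs i ub - ∑ i, xs i (v i) := by rw [h0, h0]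
      _ = ∑ i, (xs i ub - xs i (v i)) := (Finset.sum_sub_distrib ..).symm
      _ = ∑ i, xs i (ub - v i) := by simp [map_sub]
      _ = ∑ i, ‖ub - v i‖ := Finset.sum_congr rfl (fun i _ => heq i)
  -- easy direction
  have easy : ∀ (ub : X) (xs : Fin n → (X →L[ℝ] ℝ)), (∑ i, xs i) = 0 →
      (⨆ i, ‖xs i‖) = 1 →
      (∀ i, xs i (ub - v i) = ‖ub - v i‖) →
      ∀ u : X, ∑ i, ‖ub - v i‖ ≤ ∑ i, ‖u - v i‖ := by
    intro ub xs hsum hsup heq u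
    rw [← key ub xs hsum heq u]
    refine Finset.sum_le_sum fun i _ => ?_
    calc xs i (u - v i) ≤ ‖xs i (u - v i)‖ := le_abs_self _
      _ ≤ ‖xs i‖ * ‖u - v i‖ := (xs i).le_opNorm _
      _ ≤ 1 * ‖u - v i‖ := by
          exact mul_le_mul_of_nonneg_right (hle1 xs hsup i) (norm_nonneg _)
      _ = ‖u - v i‖ := one_mul _
  -- hard direction
  have hard : ∀ ub : X, (∀ u : X, ∑ i, ‖ub - v i‖ ≤ ∑ i, ‖u - v i‖) →
      ∃ xs : Fin n → (X →L[ℝ] ℝ),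
        (∑ i, xs i) = 0 ∧ (⨆ i, ‖xs i‖) = 1 ∧
        ∀ i, xs i (ub - v i) = ‖ub - v i‖ ∧ (‖xs i‖ - 1) * ‖ub - v i‖ = 0 := by
    intro ub hub
    set z : Fin n → X := fun i => ub - v i with hz
    set N : (Fin n → X) → ℝ := fun w => ∑ i, phiFT (z i) (w i) with hN
    set diag : X →ₗ[ℝ] (Fin n → X) := LinearMap.pi (fun _ => LinearMap.id) with hdiag
    have N_single : ∀ (i : Fin n) (h : X), N (Pi.single i h) = phiFT (z i) h := by
      intro i h
      rw [hN]
      beta_reduce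
      rw [Finset.sum_eq_single_of_mem i (Finset.mem_univ i)
        (fun j _ hj => by rw [Pi.single_eq_of_ne hj, phiFT_zero]), Pi.single_eq_same]
    have hf : ∀ x : ((0 : (Fin n → X) →ₗ[ℝ] ℝ).toPMap (LinearMap.range diag)).domain,
        ((0 : (Fin n → X) →ₗ[ℝ] ℝ).toPMap (LinearMap.range diag)) x ≤ N x := by
      rintro ⟨x, hx⟩
      rw [LinearMap.toPMap_domain] at hx
      obtain ⟨h, rfl⟩ := hx
      change (0 : (Fin n → X) →ₗ[ℝ] ℝ) (diag h) ≤ N (diag h)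
      rw [LinearMap.zero_apply]
      have hdiagh : ∀ i, diag h i = h := fun i => rfl
      have T : Tendsto (fun t => ∑ i, dqFT (z i) (diag h i) t) (𝓝[>] 0)
          (𝓝 (∑ i, phiFT (z i) (diag h i))) :=
        tendsto_finset_sum _ (fun i _ => tendsto_dqFT (z i) (diag h i))
      refine ge_of_tendsto T ?_
      filter_upwards [self_mem_nhdsWithin] with t ht
      have ht' : (0:ℝ) < t := ht
      have hsum : ∑ i, dqFT (z i) (diag h i) t =
          (∑ i, ‖z i + t • h‖ - ∑ i, ‖z i‖) / t := by
        rw [← Finset.sum_sub_distrib, Finset.sum_div]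
        exact Finset.sum_congr rfl fun i _ => rfl
      rw [hsum]
      apply div_nonneg _ ht'.le
      rw [sub_nonneg]
      have := hub (ub + t • h)
      refine le_trans (le_of_eq ?_) (le_trans this (le_of_eq ?_))
      · exact Finset.sum_congr rfl fun i _ => rfl
      · refine Finset.sum_congr rfl fun i _ => ?_
        congr 1
        rw [hz]
        show ub + t • h - v i = ub - v i + t • h
        abel
    obtain ⟨g, hg0, hgN⟩ := exists_extension_of_le_sublinear
      ((0 : (Fin n → X) →ₗ[ℝ] ℝ).toPMap (LinearMap.range diag)) N
      (fun c hc x => by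
        rw [hN]
        rw [Finset.mul_sum]
        exact Finset.sum_congr rfl fun i _ => by
          rw [Pi.smul_apply, phiFT_smul _ _ hc])
      (fun x y => by
        rw [hN, ← Finset.sum_add_distrib]
        exact Finset.sum_le_sum fun i _ => phiFT_add _ _ _)
      hf
    have hg_diag : ∀ h : X, g (fun _ => h) = 0 := by
      intro h
      have hmem : (fun _ => h : Fin n → X) ∈ LinearMap.range diag := ⟨h, rfl⟩
      have := hg0 ⟨(fun _ => h), by rwa [LinearMap.toPMap_domain]⟩
      simpa [LinearMap.toPMap_apply] using this
    have hps : ∀ (i : Fin n) (a : X), (Pi.single i (-a) : Fin n → X) = -Pi.single i a := by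
      intro i a
      ext j
      by_cases hji : j = i
      · subst hji; simp
      · simp [Pi.single_eq_of_ne hji]
    have hgsingle_le : ∀ (i : Fin n) (h : X), g (Pi.single i h) ≤ ‖h‖ := by
      intro i h
      refine (hgN _).trans ?_
      rw [N_single]
      exact phiFT_le_norm _ _
    have hbound : ∀ (i : Fin n) (h : X), ‖g (Pi.single i h)‖ ≤ 1 * ‖h‖ := by
      intro i h
      rw [one_mul, Real.norm_eq_abs, abs_le]
      constructor
      · have := hgsingle_le i (-h)
        rw [hps, map_neg, norm_neg] at this
        linarith
      · exact hgsingle_le i h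
    set xs : Fin n → (X →L[ℝ] ℝ) := fun i =>
      LinearMap.mkContinuous (g ∘ₗ LinearMap.single ℝ (fun _ => X) i) 1 (hbound i) with hxs
    have hxs_apply : ∀ (i : Fin n) (h : X), xs i h = g (Pi.single i h) := fun i h => rfl
    have hxs_le1 : ∀ i, ‖xs i‖ ≤ 1 :=
      fun i => LinearMap.mkContinuous_norm_le _ zero_le_one _
    have hxs_eq : ∀ i, xs i (z i) = ‖z i‖ := by
      intro i
      refine le_antisymm ?_ ?_
      · rw [hxs_apply]
        refine (hgN _).trans ?_
        rw [N_single]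
        exact le_of_eq (phiFT_self _)
      · have h1 : g (Pi.single i (-(z i))) ≤ -‖z i‖ := by
          refine (hgN _).trans ?_
          rw [N_single]
          exact le_of_eq (phiFT_neg_self _)
        rw [hps, map_neg] at h1
        rw [hxs_apply]
        linarith
    have hxs_norm : ∀ i, z i ≠ 0 → ‖xs i‖ = 1 := by
      intro i hi
      refine le_antisymm (hxs_le1 i) ?_
      have h1 : ‖z i‖ ≤ ‖xs i‖ * ‖z i‖ := by
        calc ‖z i‖ = xs i (z i) := (hxs_eq i).symm
          _ ≤ ‖xs i (z i)‖ := le_abs_self _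
          _ ≤ ‖xs i‖ * ‖z i‖ := (xs i).le_opNorm _
      have hzpos : 0 < ‖z i‖ := norm_pos_iff.2 hi
      nlinarith
    -- sum is zero
    have hsum0 : (∑ i, xs i) = 0 := by
      ext w
      simp only [ContinuousLinearMap.sum_apply, ContinuousLinearMap.zero_apply]
      have : ∑ i, xs i w = g (∑ i, Pi.single i w) := by
        rw [map_sum]
        exact Finset.sum_congr rfl fun i _ => hxs_apply i w
      rw [this]
      have : (∑ i, Pi.single i w : Fin n → X) = fun _ => w :=
        Finset.univ_sum_single (fun _ => w)
      rw [this, hg_diag]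
    -- exists i with z i ≠ 0
    have hex : ∃ i, z i ≠ 0 := by
      by_contra hcon
      push_neg at hcon
      have h0 : (⟨0, by omega⟩ : Fin n) ≠ ⟨1, by omega⟩ := by
        intro h
        exact absurd (congrArg Fin.val h) (by norm_num)
      have e0 : ub = v ⟨0, by omega⟩ := by
        have := hcon ⟨0, by omega⟩; rw [hz] at this; simpa [sub_eq_zero] using this
      have e1 : ub = v ⟨1, by omega⟩ := by
        have := hcon ⟨1, by omega⟩; rw [hz] at this; simpa [sub_eq_zero] using this
      exact h0 (hv (e0 ▸ e1))
    obtain ⟨i0, hi0⟩ := hex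
    have hsup : (⨆ i, ‖xs i‖) = 1 := by
      refine le_antisymm (ciSup_le hxs_le1) ?_
      calc (1:ℝ) = ‖xs i0‖ := (hxs_norm i0 hi0).symm
        _ ≤ ⨆ i, ‖xs i‖ := le_ciSup (f := fun j => ‖xs j‖)
              (Set.Finite.bddAbove (Set.finite_range _)) i0
    refine ⟨xs, hsum0, hsup, fun i => ⟨hxs_eq i, ?_⟩⟩
    by_cases hzi : z i = 0
    · rw [show ub - v i = z i from rfl, hzi, norm_zero, mul_zero]
    · rw [show ub - v i = z i from rfl, hxs_norm i hzi, sub_self, zero_mul]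
  constructor
  · intro ub
    constructor
    · exact hard ub
    · rintro ⟨xs, hsum, hsup, hcond⟩
      exact easy ub xs hsum hsup (fun i => (hcond i).1)
  · intro ub xs hub hsum hsup hcond hne
    have hz : ∀ i, ub - v i ≠ 0 := fun i => sub_ne_zero.2 (hne i)
    have hn1 : ∀ i, ‖xs i‖ = 1 := by
      intro i
      have := (hcond i).2
      have hpos : 0 < ‖ub - v i‖ := norm_pos_iff.2 (hz i)
      have : ‖xs i‖ - 1 = 0 := by
        rcases mul_eq_zero.1 this with h | h
        · exact h
        · exact absurd h hpos.ne'
      linarith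
    have hkey := key ub xs hsum (fun i => (hcond i).1)
    ext u
    simp only [Set.mem_setOf_eq, Set.mem_iInter]
    constructor
    · intro hmin i
      have heqsum : ∑ j, ‖u - v j‖ = ∑ j, ‖ub - v j‖ :=
        le_antisymm (hmin ub) (hub u)
      have hterm : ∀ j, xs j (u - v j) ≤ ‖u - v j‖ := by
        intro j
        calc xs j (u - v j) ≤ ‖xs j (u - v j)‖ := le_abs_self _
          _ ≤ ‖xs j‖ * ‖u - v j‖ := (xs j).le_opNorm _
          _ = ‖u - v j‖ := by rw [hn1, one_mul]
      have hzero : ∑ j, (‖u - v j‖ - xs j (u - v j)) = 0 := by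
        rw [Finset.sum_sub_distrib, hkey u, heqsum, sub_self]
      have hall := (Finset.sum_eq_zero_iff_of_nonneg
        (fun j _ => sub_nonneg.2 (hterm j))).1 hzero i (Finset.mem_univ i)
      have : xs i (u - v i) = ‖u - v i‖ := by linarith [sub_eq_zero.1 hall]
      rw [this, hn1, one_mul]
    · intro hcap w
      have heq : ∀ j, xs j (u - v j) = ‖u - v j‖ := by
        intro j
        rw [hcap j, hn1, one_mul]
      have : ∑ j, ‖u - v j‖ = ∑ j, ‖ub - v j‖ := by
        rw [← hkey u]
        exact (Finset.sum_congr rfl fun j _ => (heq j).symm)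
      rw [this]
      exact hub w
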